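/- For any random variables and conditioning as in the Poisson posterior setup, the derivative of the k-th central moment decomposes as: μ_k'(y) = −k μ₁'(y) μ_{k−1}(y) + μ_{k+1}(y) for k ≥ 3, which combined with μ₂ = μ₁' yields the recursion μ_{k+1} = μ_k' + k μ₂ μ_{k−1}. -/

import Mathlib

open MeasureTheory Set

/-- digamma function ψ = (log Γ)' -/
noncomputable def digamma (t : ℝ) : ℝ := deriv (fun s => Real.log (Real.Gamma s)) t

/-- Poisson likelihood continuously extended to real observations. -/
noncomputable def plik (x y : ℝ) : ℝ := x ^ y * Real.exp (-x) / Real.Gamma (y + 1)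

/-- marginal density of the observation -/
noncomputable def marg (px : ℝ → ℝ) (t : ℝ) : ℝ := ∫ x in Set.Ioi (0:ℝ), plik x t * px x

/-- posterior expectation E[f(x) | y = t] -/
noncomputable def postExp (px : ℝ → ℝ) (f : ℝ → ℝ) (t : ℝ) : ℝ :=
  (∫ x in Set.Ioi (0:ℝ), f x * plik x t * px x) / marg px t

/-- k-th posterior central moment of log x -/
noncomputable def cmom (px : ℝ → ℝ) (k : ℕ) (t : ℝ) : ℝ :=
  (∫ x in Set.Ioi (0:ℝ), (Real.log x - postExp px Real.log t) ^ k * plik x t * px x) / marg px t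


lemma plik_hasDerivAt {x y : ℝ} (hx : 0 < x) (hy : -1 < y) :
    HasDerivAt (fun s => plik x s) (plik x y * (Real.log x - digamma (y + 1))) y := by
  have hy1 : 0 < y + 1 := by linarith
  have hΓpos : 0 < Real.Gamma (y + 1) := Real.Gamma_pos_of_pos hy1
  have hΓd : DifferentiableAt ℝ Real.Gamma (y + 1) :=
    Real.differentiableAt_Gamma (fun m => by
      have : (0:ℝ) ≤ m := Nat.cast_nonneg m
      intro h; linarith [h ▸ hy1])
  have hG : HasDerivAt Real.Gamma (deriv Real.Gamma (y + 1)) (y + 1) := hΓd.hasDerivAt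
  have hGc : HasDerivAt (fun s => Real.Gamma (s + 1)) (deriv Real.Gamma (y + 1)) y := by
    simpa [Function.comp_def] using hG.comp y ((hasDerivAt_id y).add_const 1)
  have hψval : digamma (y + 1) = deriv Real.Gamma (y + 1) / Real.Gamma (y + 1) := by
    have hlog : HasDerivAt (fun s => Real.log (Real.Gamma s))
        (deriv Real.Gamma (y + 1) / Real.Gamma (y + 1)) (y + 1) := hG.log (ne_of_gt hΓpos)
    rw [digamma, hlog.deriv]
  have hpow : HasDerivAt (fun s => x ^ s) (x ^ y * Real.log x) y :=
    (Real.hasStrictDerivAt_const_rpow hx y).hasDerivAt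
  have hnum : HasDerivAt (fun s => x ^ s * Real.exp (-x)) (x ^ y * Real.log x * Real.exp (-x)) y :=
    hpow.mul_const _
  have hdiv := hnum.div hGc (ne_of_gt hΓpos)
  have heq : plik x y * (Real.log x - digamma (y + 1))
      = (x ^ y * Real.log x * Real.exp (-x) * Real.Gamma (y + 1)
          - x ^ y * Real.exp (-x) * deriv Real.Gamma (y + 1)) / Real.Gamma (y + 1) ^ 2 := by
    rw [plik, hψval]; field_simp
  rw [heq]; exact hdiv

lemma plik_nonneg {x y : ℝ} (hx : 0 < x) (hy : -1 < y) : 0 ≤ plik x y := by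
  have hΓpos : 0 < Real.Gamma (y + 1) := Real.Gamma_pos_of_pos (by linarith)
  exact div_nonneg (mul_nonneg (Real.rpow_nonneg hx.le y) (Real.exp_nonneg _)) hΓpos.le

/-- Decomposition of the derivative of the k-th posterior central moment:
mu_k'(y) = -k mu_1'(y) mu_{k-1}(y) + mu_{k+1}(y) for k >= 3, which combined with
mu_2 = mu_1' yields mu_{k+1} = mu_k' + k mu_2 mu_{k-1}. -/
theorem poisson_moment_deriv_decomposition (px : ℝ → ℝ)
    (hnn : ∀ x ∈ Set.Ioi (0:ℝ), 0 ≤ px x)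
    (y : ℝ) (hy : -1 < y)
    (hpos : 0 < marg px y)
    (hint : ∀ k : ℕ, IntegrableOn (fun x => |Real.log x| ^ k * plik x y * px x) (Set.Ioi 0))
    -- differentiation under the integral sign for the marginal:
    (hmargD : HasDerivAt (marg px)
      (∫ x in Set.Ioi (0:ℝ), (Real.log x - digamma (y + 1)) * plik x y * px x) y)
    -- mu_1 is differentiable:
    (hmu1D : DifferentiableAt ℝ (postExp px Real.log) y)
    -- differentiation under the integral sign for every centered moment:
    (hDUI : ∀ j : ℕ, HasDerivAt
      (fun s => ∫ x in Set.Ioi (0:ℝ),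
        (Real.log x - postExp px Real.log s) ^ j * plik x s * px x)
      (∫ x in Set.Ioi (0:ℝ),
        deriv (fun s => (Real.log x - postExp px Real.log s) ^ j * plik x s * px x) y) y) :
    ∀ k : ℕ, 3 ≤ k →
      deriv (cmom px k) y
        = -(k : ℝ) * deriv (postExp px Real.log) y * cmom px (k - 1) y
            + cmom px (k + 1) y ∧
      (deriv (postExp px Real.log) y = cmom px 2 y →
        cmom px (k + 1) y
          = deriv (cmom px k) y + (k : ℝ) * cmom px 2 y * cmom px (k - 1) y) := by
  intro k hk
  obtain ⟨m, rfl⟩ : ∃ m, k = m + 1 := ⟨k - 1, by omega⟩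
  have hMne : marg px y ≠ 0 := ne_of_gt hpos
  -- abbreviations (plain lets via have-style defs)
  -- integrability of plik * px
  have hg : IntegrableOn (fun x => plik x y * px x) (Ioi 0) := by
    have h := hint 0; simpa using h
  have hLi : ∀ i : ℕ, IntegrableOn (fun x => Real.log x ^ i * plik x y * px x) (Ioi 0) := by
    intro i
    refine (hint i).mono' ?_ ?_
    · have h := ((Real.measurable_log.pow_const i).aestronglyMeasurable).mul hg.aestronglyMeasurable
      simpa [mul_assoc, Pi.mul_def] using h
    · filter_upwards [ae_restrict_mem measurableSet_Ioi] with x hx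
      have hplik : 0 ≤ plik x y := plik_nonneg hx hy
      rw [Real.norm_eq_abs, abs_mul, abs_mul, abs_pow, abs_of_nonneg hplik,
        abs_of_nonneg (hnn x hx)]
  have hpoly : ∀ (a : ℝ) (j : ℕ),
      IntegrableOn (fun x => (Real.log x - a) ^ j * plik x y * px x) (Ioi 0) := by
    intro a j
    have heq : (fun x => (Real.log x - a) ^ j * plik x y * px x)
        = fun x => ∑ i ∈ Finset.range (j + 1),
            ((-a) ^ (j - i) * (j.choose i : ℝ)) * (Real.log x ^ i * plik x y * px x) := by
      funext x
      rw [sub_eq_add_neg, add_pow, Finset.sum_mul, Finset.sum_mul]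
      exact Finset.sum_congr rfl fun i _ => by ring
    rw [heq]
    exact integrable_finset_sum _ fun i _ => ((hLi i).const_mul _)
  -- N_1 = 0
  have hmuM : postExp px Real.log y * marg px y
      = ∫ x in Ioi (0:ℝ), Real.log x * plik x y * px x := by
    rw [postExp, div_mul_cancel₀ _ hMne]
  have hN1 : (∫ x in Ioi (0:ℝ),
      (Real.log x - postExp px Real.log y) * plik x y * px x) = 0 := by
    have heq : (fun x => (Real.log x - postExp px Real.log y) * plik x y * px x)
        = fun x => Real.log x * plik x y * px x
            - postExp px Real.log y * (plik x y * px x) := by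
      funext x; ring
    rw [heq, integral_sub (by have h := hLi 1; simp only [pow_one] at h; exact h) (hg.const_mul _), integral_const_mul]
    have : (∫ x in Ioi (0:ℝ), plik x y * px x) = marg px y := rfl
    rw [this, ← hmuM, sub_self]
  -- marginal derivative
  have hmarg' : HasDerivAt (marg px)
      ((postExp px Real.log y - digamma (y + 1)) * marg px y) y := by
    have hval : (∫ x in Ioi (0:ℝ), (Real.log x - digamma (y + 1)) * plik x y * px x)
        = (postExp px Real.log y - digamma (y + 1)) * marg px y := by
      have heq : (fun x => (Real.log x - digamma (y + 1)) * plik x y * px x)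
          = fun x => (Real.log x - postExp px Real.log y) * plik x y * px x
              + (postExp px Real.log y - digamma (y + 1)) * (plik x y * px x) := by
        funext x; ring
      rw [heq, integral_add (by have h := hpoly (postExp px Real.log y) 1; simp only [pow_one] at h; exact h)
        (hg.const_mul _), hN1, integral_const_mul, zero_add]
      rfl
    rw [← hval]; exact hmargD
  -- derivative of the numerator
  have hDint : (∫ x in Ioi (0:ℝ),
      deriv (fun s => (Real.log x - postExp px Real.log s) ^ (m + 1) * plik x s * px x) y)
      = (-((m:ℝ) + 1) * deriv (postExp px Real.log) y)
          * (∫ x in Ioi (0:ℝ), (Real.log x - postExp px Real.log y) ^ m * plik x y * px x)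
        + ((∫ x in Ioi (0:ℝ),
            (Real.log x - postExp px Real.log y) ^ (m + 2) * plik x y * px x)
          + (postExp px Real.log y - digamma (y + 1))
            * (∫ x in Ioi (0:ℝ),
              (Real.log x - postExp px Real.log y) ^ (m + 1) * plik x y * px x)) := by
    have hcongr : (∫ x in Ioi (0:ℝ),
        deriv (fun s => (Real.log x - postExp px Real.log s) ^ (m + 1) * plik x s * px x) y)
        = ∫ x in Ioi (0:ℝ),
            ((-((m:ℝ) + 1) * deriv (postExp px Real.log) y)
                * ((Real.log x - postExp px Real.log y) ^ m * plik x y * px x)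
            + ((Real.log x - postExp px Real.log y) ^ (m + 2) * plik x y * px x
              + (postExp px Real.log y - digamma (y + 1))
                * ((Real.log x - postExp px Real.log y) ^ (m + 1) * plik x y * px x))) := by
      refine setIntegral_congr_fun measurableSet_Ioi (fun x hx => ?_)
      have hd := (((hmu1D.hasDerivAt.const_sub (Real.log x)).pow (m + 1)).mul
        (plik_hasDerivAt hx hy)).mul_const (px x)
      rw [show deriv (fun s => (Real.log x - postExp px Real.log s) ^ (m + 1) * plik x s * px x) y = _ from hd.deriv]
      simp only [Nat.add_sub_cancel, Pi.pow_apply]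
      push_cast
      ring
    have hA : IntegrableOn (fun x => (-((m:ℝ) + 1) * deriv (postExp px Real.log) y)
        * ((Real.log x - postExp px Real.log y) ^ m * plik x y * px x)) (Ioi 0) := by
      have h := (hpoly (postExp px Real.log y) m).const_mul
        (-((m:ℝ) + 1) * deriv (postExp px Real.log) y)
      simpa [mul_assoc, IntegrableOn] using h
    have hB : IntegrableOn (fun x =>
        (Real.log x - postExp px Real.log y) ^ (m + 2) * plik x y * px x) (Ioi 0) :=
      hpoly _ (m + 2)
    have hC : IntegrableOn (fun x => (postExp px Real.log y - digamma (y + 1))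
        * ((Real.log x - postExp px Real.log y) ^ (m + 1) * plik x y * px x)) (Ioi 0) := by
      have h := (hpoly (postExp px Real.log y) (m + 1)).const_mul
        (postExp px Real.log y - digamma (y + 1))
      simpa [mul_assoc, IntegrableOn] using h
    have hBC : IntegrableOn (fun x =>
        (Real.log x - postExp px Real.log y) ^ (m + 2) * plik x y * px x
          + (postExp px Real.log y - digamma (y + 1))
            * ((Real.log x - postExp px Real.log y) ^ (m + 1) * plik x y * px x)) (Ioi 0) :=
      hB.add hC
    rw [hcongr, integral_add hA hBC, integral_add hB hC, integral_const_mul, integral_const_mul]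
  have hNder := hDUI (m + 1)
  rw [hDint] at hNder
  have hq := hNder.div hmarg' hMne
  have hCder := hq.deriv
  have hfirst : deriv (cmom px (m + 1)) y
      = -((m:ℝ) + 1) * deriv (postExp px Real.log) y * cmom px m y + cmom px (m + 2) y := by
    have hgoal : deriv (cmom px (m + 1)) y = deriv (fun s =>
        (∫ x in Ioi (0:ℝ), (Real.log x - postExp px Real.log s) ^ (m + 1) * plik x s * px x)
          / marg px s) y := rfl
    have h1 : cmom px m y = (∫ x in Ioi (0:ℝ),
        (Real.log x - postExp px Real.log y) ^ m * plik x y * px x) / marg px y := rfl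
    have h2 : cmom px (m + 2) y = (∫ x in Ioi (0:ℝ),
        (Real.log x - postExp px Real.log y) ^ (m + 2) * plik x y * px x) / marg px y := rfl
    rw [hgoal, show (fun s => (∫ x in Ioi (0:ℝ), (Real.log x - postExp px Real.log s) ^ (m + 1) * plik x s * px x) / marg px s) = (fun s => ∫ x in Ioi (0:ℝ), (Real.log x - postExp px Real.log s) ^ (m + 1) * plik x s * px x) / marg px from rfl, hCder, h1, h2]
    field_simp
    ring
  have hidx : m + 1 - 1 = m := by omega
  have hcast : ((m + 1 : ℕ) : ℝ) = (m : ℝ) + 1 := by push_cast; ring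
  constructor
  · rw [hidx, hcast]
    have : m + 1 + 1 = m + 2 := rfl
    rw [this]
    exact hfirst
  · intro h2
    rw [hidx, hcast]
    have h3 : m + 1 + 1 = m + 2 := rfl
    rw [h3]
    rw [h2] at hfirst
    linarith [hfirst]
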